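/- Let D be a Dedekind domain. For polynomials f₁, f₂ ∈ D[X], the content ideal is multiplicative: ct(f₁ f₂) = ct(f₁) · ct(f₂), where ct(f) is the ideal of D generated by the coefficients of f. -/

import Mathlib

/-- The content ideal of a polynomial: the ideal generated by its coefficients. -/
noncomputable def contentIdeal {D : Type*} [CommRing D] (f : Polynomial D) : Ideal D :=
  Ideal.span (Set.range f.coeff)

open Polynomial in
lemma contentIdeal_map {D R : Type*} [CommRing D] [CommRing R] (φ : D →+* R)
    (f : Polynomial D) :
    (_root_.contentIdeal f).map φ = _root_.contentIdeal (f.map φ) := by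
  unfold _root_.contentIdeal
  rw [Ideal.map_span]
  congr 1
  ext x
  constructor
  · rintro ⟨y, ⟨i, rfl⟩, rfl⟩
    exact ⟨i, coeff_map φ i⟩
  · rintro ⟨i, rfl⟩
    exact ⟨f.coeff i, ⟨i, rfl⟩, (coeff_map φ i).symm⟩

lemma span_image_finset_gcd {R ι : Type*} [CommRing R] [IsDomain R]
    [IsPrincipalIdealRing R] [NormalizedGCDMonoid R] [DecidableEq R] [DecidableEq ι]
    (s : Finset ι) (g : ι → R) :
    Ideal.span (↑(s.image g) : Set R) = Ideal.span {s.gcd g} := by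
  induction s using Finset.induction_on with
  | empty =>
    simp only [Finset.image_empty, Finset.coe_empty, Ideal.span_empty, Finset.gcd_empty]
    exact (Ideal.span_singleton_eq_bot.mpr rfl).symm
  | @insert a s ha ih =>
    rw [Finset.image_insert, Finset.coe_insert, Ideal.span_insert, ih, Finset.gcd_insert,
      ← Ideal.span_insert, ← _root_.span_gcd]

open Polynomial in
lemma contentIdeal_eq_span_content {R : Type*} [CommRing R] [IsDomain R]
    [IsPrincipalIdealRing R] [NormalizedGCDMonoid R] (f : Polynomial R) :
    _root_.contentIdeal f = Ideal.span {f.content} := by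
  classical
  apply le_antisymm
  · rw [_root_.contentIdeal, Ideal.span_le]
    rintro x ⟨i, rfl⟩
    rw [SetLike.mem_coe, Ideal.mem_span_singleton]
    exact f.content_dvd_coeff i
  · have h : Ideal.span (↑(f.support.image f.coeff) : Set R) = Ideal.span {f.content} :=
      span_image_finset_gcd f.support f.coeff
    rw [← h]
    apply Ideal.span_mono
    intro x hx
    simp only [Finset.coe_image, Set.mem_image, Finset.mem_coe] at hx
    obtain ⟨i, _, rfl⟩ := hx
    exact ⟨i, rfl⟩

open Polynomial in
lemma contentIdeal_mul_of_pid {R : Type*} [CommRing R] [IsDomain R]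
    [IsPrincipalIdealRing R] (f g : Polynomial R) :
    _root_.contentIdeal (f * g) = _root_.contentIdeal f * _root_.contentIdeal g := by
  letI := UniqueFactorizationMonoid.normalizationMonoid (α := R)
  letI := UniqueFactorizationMonoid.toNormalizedGCDMonoid R
  rw [contentIdeal_eq_span_content, contentIdeal_eq_span_content,
    contentIdeal_eq_span_content,
    Ideal.span_singleton_eq_span_singleton.mpr (associated_content_mul f g),
    Ideal.span_singleton_mul_span_singleton]

/-- Over a Dedekind domain, the content ideal is multiplicative:
`ct(f₁ f₂) = ct(f₁) · ct(f₂)` (Gauss/Dedekind–Mertens for Dedekind domains). -/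
theorem contentIdeal_mul {D : Type*} [CommRing D] [IsDomain D] [IsDedekindDomain D]
    (f₁ f₂ : Polynomial D) :
    contentIdeal (f₁ * f₂) = contentIdeal f₁ * contentIdeal f₂ := by
  apply Ideal.eq_of_localization_maximal
  intro P hP
  haveI : P.IsPrime := hP.isPrime
  have hpid : IsPrincipalIdealRing (Localization.AtPrime P) := by
    by_cases hbot : P = ⊥
    · have hfield : IsField (Localization.AtPrime P) := by
        apply IsLocalRing.isField_iff_maximalIdeal_eq.mpr
        subst hbot
        rw [← Localization.AtPrime.map_eq_maximalIdeal, Ideal.map_bot]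
      letI := hfield.toField
      infer_instance
    · haveI := IsLocalization.AtPrime.isDiscreteValuationRing_of_dedekind_domain D hbot
        (Localization.AtPrime P)
      infer_instance
  rw [Ideal.map_mul, contentIdeal_map, contentIdeal_map, contentIdeal_map,
    Polynomial.map_mul]
  exact contentIdeal_mul_of_pid _ _
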